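/- Let n, m, k be positive integers, ε_f, ε_g ≥ 0, and P a symmetric positive definite real (n+m)×(n+m) matrix. Let Ā be a real n×(n+m) matrix, K̄ a real m×(n+m) matrix, C̄ ∈ ℝⁿ⁺ᵐ, Q a real k×(n+m) matrix, f ∈ ℝᵏ, and η₁, η₂, η₃ > 0. Set Λ := P(R₁Ā + R₂K̄) + (R₁Ā + R₂K̄)ᵀP. Suppose the symmetric block matrix with diagonal block sizes (n+m, n, n, 1, m) given by [[Λ + η₁ε_f²I_{n+m} − η₃QᵀQ, PR₁, PR₁, PC̄ − η₃Qᵀf, PR₂], [⋆, R₁ᵀPR₁ − η₁Iₙ, 0, 0, 0], [⋆, ⋆, R₁ᵀPR₁ − η₂Iₙ, 0, 0], [⋆, ⋆, ⋆, η₂ε_g² − η₃(fᵀf − 1), 0], [⋆, ⋆, ⋆, ⋆, −(1/2)R₂ᵀPR₂]] is negative definite (where ⋆ denotes entries determined by symmetry). Then for all x̄ ∈ ℝⁿ⁺ᵐ, a ∈ ℝⁿ and c ∈ ℝⁿ satisfying ‖a‖ ≤ ε_f‖x̄‖, ‖c‖ ≤ ε_g and ‖Qx̄ + f‖ ≤ 1,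 one has x̄ᵀΛx̄ + 2 x̄ᵀ P R₂ (R₂ᵀPR₂)⁻¹ R₂ᵀ P x̄ + 2 x̄ᵀ P R₁ a + aᵀ R₁ᵀ P R₁ a + 2 x̄ᵀ P C̄ + 2 x̄ᵀ P R₁ c + cᵀ R₁ᵀ P R₁ c < 0. -/

import Mathlib

open Matrix

/-- The block matrix `R₁ = [Iₙ; 0] : ℝ^{(n+m)×n}`. -/
def R1 (n m : ℕ) : Matrix (Fin n ⊕ Fin m) (Fin n) ℝ :=
  Matrix.of fun i j => if i = Sum.inl j then 1 else 0

/-- The block matrix `R₂ = [0; Iₘ] : ℝ^{(n+m)×m}`. -/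
def R2 (n m : ℕ) : Matrix (Fin n ⊕ Fin m) (Fin m) ℝ :=
  Matrix.of fun i j => if i = Sum.inr j then 1 else 0

/-- Matrix–vector multiplication viewed as a map between Euclidean spaces
(so that `‖·‖` is the Euclidean norm). -/
def Matrix.mulVecE {ι κ : Type*} [Fintype κ] (M : Matrix ι κ ℝ)
    (x : EuclideanSpace ℝ κ) : EuclideanSpace ℝ ι :=
  WithLp.toLp 2 (M.mulVec x)


lemma dp_tmul {ι κ : Type*} [Fintype ι] [Fintype κ] (A : Matrix ι κ ℝ) (x : ι → ℝ) (y : κ → ℝ) :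
    x ⬝ᵥ A.mulVec y = Aᵀ.mulVec x ⬝ᵥ y := by
  rw [Matrix.dotProduct_mulVec, ← Matrix.mulVec_transpose]

lemma euclid_sq {ι : Type*} [Fintype ι] (a : EuclideanSpace ℝ ι) : ‖a‖ ^ 2 = a ⬝ᵥ a := by
  rw [EuclideanSpace.norm_eq, Real.sq_sqrt (by positivity)]
  simp [dotProduct, Real.norm_eq_abs, sq_abs, sq]

set_option maxHeartbeats 800000 in
/-- LMI (24) implies inequality (34): negative definiteness of the
symmetric block matrix with diagonal block sizes `(n+m, n, n, 1, m)`,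
`[[Λ + η₁ε_f²I − η₃QᵀQ, PR₁, PR₁, PC̄ − η₃Qᵀf, PR₂],
  [⋆, R₁ᵀPR₁ − η₁Iₙ, 0, 0, 0], [⋆, ⋆, R₁ᵀPR₁ − η₂Iₙ, 0, 0],
  [⋆, ⋆, ⋆, η₂ε_g² − η₃(fᵀf − 1), 0], [⋆, ⋆, ⋆, ⋆, −(1/2)R₂ᵀPR₂]]`
(expressed here, as in the paper, via its quadratic form: `zᵀMz < 0` for all `z ≠ 0`),
implies, for all `x̄`, `a`, `c` with `‖a‖ ≤ ε_f‖x̄‖`, `‖c‖ ≤ ε_g`, `‖Qx̄ + f‖ ≤ 1`: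
`x̄ᵀΛx̄ + 2x̄ᵀPR₂(R₂ᵀPR₂)⁻¹R₂ᵀPx̄ + 2x̄ᵀPR₁a + aᵀR₁ᵀPR₁a + 2x̄ᵀPC̄ + 2x̄ᵀPR₁c
  + cᵀR₁ᵀPR₁c < 0`. -/
theorem lmi_24_implies_inequality_34
    (n m k : ℕ) (hn : 0 < n) (hm : 0 < m) (hk : 0 < k)
    (εf εg : ℝ) (hεf : 0 ≤ εf) (hεg : 0 ≤ εg)
    (P : Matrix (Fin n ⊕ Fin m) (Fin n ⊕ Fin m) ℝ) (hP : P.PosDef)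
    (Abar : Matrix (Fin n) (Fin n ⊕ Fin m) ℝ)
    (Kbar : Matrix (Fin m) (Fin n ⊕ Fin m) ℝ)
    (Cbar : Fin n ⊕ Fin m → ℝ)
    (Q : Matrix (Fin k) (Fin n ⊕ Fin m) ℝ) (f : EuclideanSpace ℝ (Fin k))
    (η₁ η₂ η₃ : ℝ) (hη₁ : 0 < η₁) (hη₂ : 0 < η₂) (hη₃ : 0 < η₃)
    (Λ : Matrix (Fin n ⊕ Fin m) (Fin n ⊕ Fin m) ℝ)
    (hΛ : Λ = P * (R1 n m * Abar + R2 n m * Kbar)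
      + (R1 n m * Abar + R2 n m * Kbar)ᵀ * P)
    (hLMI : ∀ (z₀ : Fin n ⊕ Fin m → ℝ) (z₁ z₂ : Fin n → ℝ) (z₃ : ℝ) (z₄ : Fin m → ℝ),
      ¬(z₀ = 0 ∧ z₁ = 0 ∧ z₂ = 0 ∧ z₃ = 0 ∧ z₄ = 0) →
      z₀ ⬝ᵥ (Λ + (η₁ * εf ^ 2) • (1 : Matrix (Fin n ⊕ Fin m) (Fin n ⊕ Fin m) ℝ)
            - η₃ • (Qᵀ * Q)).mulVec z₀
        + 2 * (z₀ ⬝ᵥ (P * R1 n m).mulVec z₁)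
        + 2 * (z₀ ⬝ᵥ (P * R1 n m).mulVec z₂)
        + 2 * z₃ * (z₀ ⬝ᵥ (P.mulVec Cbar - η₃ • Qᵀ.mulVec f))
        + 2 * (z₀ ⬝ᵥ (P * R2 n m).mulVec z₄)
        + z₁ ⬝ᵥ ((R1 n m)ᵀ * P * R1 n m - η₁ • (1 : Matrix (Fin n) (Fin n) ℝ)).mulVec z₁
        + z₂ ⬝ᵥ ((R1 n m)ᵀ * P * R1 n m - η₂ • (1 : Matrix (Fin n) (Fin n) ℝ)).mulVec z₂
        + (η₂ * εg ^ 2 - η₃ * (f ⬝ᵥ f - 1)) * z₃ ^ 2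
        - (1 / 2) * (z₄ ⬝ᵥ ((R2 n m)ᵀ * P * R2 n m).mulVec z₄) < 0) :
    ∀ (xbar : EuclideanSpace ℝ (Fin n ⊕ Fin m)) (a c : EuclideanSpace ℝ (Fin n)),
      ‖a‖ ≤ εf * ‖xbar‖ → ‖c‖ ≤ εg → ‖Q.mulVecE xbar + f‖ ≤ 1 →
      xbar ⬝ᵥ Λ.mulVec xbar
        + 2 * (xbar ⬝ᵥ (P * R2 n m * ((R2 n m)ᵀ * P * R2 n m)⁻¹
            * (R2 n m)ᵀ * P).mulVec xbar)
        + 2 * (xbar ⬝ᵥ (P * R1 n m).mulVec a)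
        + a ⬝ᵥ ((R1 n m)ᵀ * P * R1 n m).mulVec a
        + 2 * (xbar ⬝ᵥ P.mulVec Cbar)
        + 2 * (xbar ⬝ᵥ (P * R1 n m).mulVec c)
        + c ⬝ᵥ ((R1 n m)ᵀ * P * R1 n m).mulVec c < 0 := by
  
  intro x a c ha hc hq
  have hPt : Pᵀ = P := hP.1
  -- S := R₂ᵀ P R₂ is positive definite
  set S : Matrix (Fin m) (Fin m) ℝ := (R2 n m)ᵀ * P * (R2 n m) with hSdef
  have hR2inj : ∀ z : Fin m → ℝ, (R2 n m).mulVec z = 0 → z = 0 := by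
    intro z hz
    funext j
    have := congrFun hz (Sum.inr j)
    simpa [R2, Matrix.mulVec, dotProduct] using this
  have hSpd : S.PosDef := by
    refine Matrix.PosDef.of_dotProduct_mulVec_pos ?_ ?_
    · show Sᴴ = S
      simp only [hSdef, Matrix.conjTranspose_mul]
      simp only [Matrix.conjTranspose_eq_transpose_of_trivial, Matrix.transpose_transpose]
      rw [hPt, Matrix.mul_assoc]
    · intro z hz
      have h1 : star z ⬝ᵥ S.mulVec z
          = star ((R2 n m).mulVec z) ⬝ᵥ P.mulVec ((R2 n m).mulVec z) := by
        simp only [star_trivial, hSdef, ← Matrix.mulVec_mulVec, dp_tmul,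
          Matrix.transpose_transpose]
      rw [h1]
      exact hP.dotProduct_mulVec_pos (fun h => hz (hR2inj z h))
  have hS1 : S * S⁻¹ = 1 := Matrix.mul_nonsing_inv S hSpd.det_pos.ne'.isUnit
  set w : Fin m → ℝ := ((R2 n m)ᵀ * P).mulVec x with hw
  set v : Fin m → ℝ := S⁻¹.mulVec w with hv
  set z₄ : Fin m → ℝ := (2 : ℝ) • v with hz₄
  have hPR2t : (P * R2 n m)ᵀ = (R2 n m)ᵀ * P := by rw [Matrix.transpose_mul, hPt]
  -- E1
  have E1 : x ⬝ᵥ (P * R2 n m * S⁻¹ * (R2 n m)ᵀ * P).mulVec x = w ⬝ᵥ v := by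
    have hmv : (P * R2 n m * S⁻¹ * (R2 n m)ᵀ * P).mulVec x = (P * R2 n m).mulVec v := by
      rw [hv, hw, Matrix.mulVec_mulVec, Matrix.mulVec_mulVec]
      simp only [Matrix.mul_assoc]
    rw [hmv, dp_tmul, hPR2t]
  -- E2
  have E2 : x ⬝ᵥ (P * R2 n m).mulVec z₄ = 2 * (w ⬝ᵥ v) := by
    rw [hz₄, Matrix.mulVec_smul, dotProduct_smul, dp_tmul, hPR2t, smul_eq_mul]
  -- E3
  have E3 : z₄ ⬝ᵥ S.mulVec z₄ = 4 * (w ⬝ᵥ v) := by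
    have hSv : S.mulVec v = w := by
      rw [hv, Matrix.mulVec_mulVec, hS1, Matrix.one_mulVec]
    rw [hz₄, Matrix.mulVec_smul, hSv, smul_dotProduct, dotProduct_smul, smul_eq_mul,
      smul_eq_mul, dotProduct_comm]
    ring
  -- expansions
  have dpQ : ∀ (y0 : Fin n ⊕ Fin m → ℝ) (y : Fin k → ℝ),
      y0 ⬝ᵥ Qᵀ.mulVec y = Q.mulVec y0 ⬝ᵥ y := fun y0 y => by
    rw [dp_tmul, Matrix.transpose_transpose]
  have T0 : x ⬝ᵥ (Λ + (η₁ * εf ^ 2) • (1 : Matrix (Fin n ⊕ Fin m) (Fin n ⊕ Fin m) ℝ)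
        - η₃ • (Qᵀ * Q)).mulVec x
      = x ⬝ᵥ Λ.mulVec x + η₁ * εf ^ 2 * (x ⬝ᵥ x)
        - η₃ * (Q.mulVec x ⬝ᵥ Q.mulVec x) := by
    rw [Matrix.sub_mulVec, Matrix.add_mulVec, Matrix.smul_mulVec, Matrix.one_mulVec,
      Matrix.smul_mulVec, dotProduct_sub, dotProduct_add, dotProduct_smul,
      dotProduct_smul, smul_eq_mul, smul_eq_mul, ← Matrix.mulVec_mulVec, dpQ]
  have T3 : x ⬝ᵥ (P.mulVec Cbar - η₃ • Qᵀ.mulVec f)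
      = x ⬝ᵥ P.mulVec Cbar - η₃ * (Q.mulVec x ⬝ᵥ f) := by
    rw [dotProduct_sub, dotProduct_smul, smul_eq_mul, dpQ]
  have T5 : ∀ (η : ℝ) (u : Fin n → ℝ),
      u ⬝ᵥ ((R1 n m)ᵀ * P * R1 n m - η • (1 : Matrix (Fin n) (Fin n) ℝ)).mulVec u
      = u ⬝ᵥ ((R1 n m)ᵀ * P * R1 n m).mulVec u - η * (u ⬝ᵥ u) := by
    intro η u
    rw [Matrix.sub_mulVec, dotProduct_sub, Matrix.smul_mulVec, Matrix.one_mulVec,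
      dotProduct_smul, smul_eq_mul]
  -- norm facts
  have hx0 : (0:ℝ) ≤ ‖x‖ := norm_nonneg _
  have ha2 : a ⬝ᵥ a ≤ εf ^ 2 * (x ⬝ᵥ x) := by
    rw [← euclid_sq, ← euclid_sq]
    nlinarith [mul_self_le_mul_self (norm_nonneg a) ha]
  have hc2 : c ⬝ᵥ c ≤ εg ^ 2 := by
    rw [← euclid_sq]
    nlinarith [mul_self_le_mul_self (norm_nonneg c) hc]
  have hq2 : Q.mulVec x ⬝ᵥ Q.mulVec x + 2 * (Q.mulVec x ⬝ᵥ f) + f ⬝ᵥ f ≤ 1 := by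
    have h1 : (Q.mulVecE x + f).ofLp ⬝ᵥ (Q.mulVecE x + f).ofLp ≤ 1 := by
      rw [← euclid_sq]
      nlinarith [mul_self_le_mul_self (norm_nonneg (Q.mulVecE x + f)) hq]
    have h2 : (Q.mulVecE x + f).ofLp ⬝ᵥ (Q.mulVecE x + f).ofLp
        = (Q.mulVec x + fun i => f i) ⬝ᵥ (Q.mulVec x + fun i => f i) := rfl
    rw [h2, dotProduct_add, add_dotProduct, add_dotProduct,
      dotProduct_comm (fun i => f i) (Q.mulVec x)] at h1
    calc Q.mulVec x ⬝ᵥ Q.mulVec x + 2 * (Q.mulVec x ⬝ᵥ f) + f ⬝ᵥ f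
        = Q.mulVec x ⬝ᵥ Q.mulVec x + Q.mulVec x ⬝ᵥ (fun i => f i)
          + (Q.mulVec x ⬝ᵥ (fun i => f i) + (fun i => f i) ⬝ᵥ (fun i => f i)) := by ring
      _ ≤ 1 := h1
  -- instantiate the LMI
  have hkey := hLMI x a c 1 z₄ (by rintro ⟨-, -, -, h, -⟩; exact one_ne_zero h)
  rw [T0, T3, T5 η₁ a, T5 η₂ c, E2, E3] at hkey
  -- final combination
  have m1 : η₁ * (a ⬝ᵥ a) ≤ η₁ * (εf ^ 2 * (x ⬝ᵥ x)) := by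
    exact mul_le_mul_of_nonneg_left ha2 hη₁.le
  have m2 : η₂ * (c ⬝ᵥ c) ≤ η₂ * εg ^ 2 := mul_le_mul_of_nonneg_left hc2 hη₂.le
  have m3 : η₃ * (Q.mulVec x ⬝ᵥ Q.mulVec x + 2 * (Q.mulVec x ⬝ᵥ f) + f ⬝ᵥ f) ≤ η₃ * 1 :=
    mul_le_mul_of_nonneg_left hq2 hη₃.le
  rw [E1]
  linarith [hkey, m1, m2, m3]
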